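/- Let v, ϖ, h⊥ : ℝ² → ℝ^{N−1} and h∥ : ℝ² → ℝ be differentiable, let Θ : ℝ² → (N−1)×(N−1) skew-symmetric real matrices and H : ℝ² → (N−1)×(N−1) symmetric trace-free real matrices be differentiable. Define the N×N matrix-valued functions ω_x := ω_v, ω_t := [[0, ϖ], [−ϖᵀ, Θ]], and e_t := κ·[[(1/N − 1)h∥, h⊥], [h⊥ᵀ, H + (h∥/N)·1]], where 1 is the (N−1)×(N−1) identity, and let E be constant. Then the zero-torsion equation ∂_x e_t − ∂_t E + [ω_x, e_t] − [ω_t, E] = 0 holds identically on ℝ² if and only if the three component equations 0 = 2κ⁻²∂_x h∥ − 2 v · h⊥, 0 = ϖ − h∥ v − ∂_x h⊥ − vH, and 0 = −∂_x(H + (h∥/N)·1) + v⊗h⊥ + h⊥⊗v hold identically, where vH denotes the row vector (vH)_j = Σ_i v_i H_{ij}. (In particular, Θ does not enter.) -/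

import Mathlib

open Matrix

/-- For `v ∈ ℝ^{N−1}` (with `N = n+1`), the `N×N` skew-symmetric matrix
`ω_v = [[0, v], [−vᵀ, 0]]`. -/
def omegaMat {n : ℕ} (v : Fin n → ℝ) : Matrix (Fin (n + 1)) (Fin (n + 1)) ℝ :=
  Matrix.of (Fin.cons (Fin.cons 0 v) (fun i' => Fin.cons (-(v i')) 0))

/-- The `N×N` skew matrix `[[0, ϖ], [−ϖᵀ, Θ]]` for `ϖ ∈ ℝ^{N−1}`, `Θ ∈ 𝔰𝔬(N−1)`. -/
def Wmat {n : ℕ} (ϖ : Fin n → ℝ) (Θ : Matrix (Fin n) (Fin n) ℝ) :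
    Matrix (Fin (n + 1)) (Fin (n + 1)) ℝ :=
  Matrix.of (Fin.cons (Fin.cons 0 ϖ) (fun i' => Fin.cons (-(ϖ i')) (Θ i')))

/-- The adapted frame element `E = (κ/N)·diag(1−N, 1, …, 1)`, `N = n+1`. -/
noncomputable def Emat (n : ℕ) (κ : ℝ) : Matrix (Fin (n + 1)) (Fin (n + 1)) ℝ :=
  (κ / ((n : ℝ) + 1)) • Matrix.diagonal (Fin.cons (1 - ((n : ℝ) + 1)) (fun _ => 1))

/-- The flow-direction frame element
`e_t = κ·[[(1/N − 1)h∥, h⊥], [h⊥ᵀ, H + (h∥/N)·1]]`, `N = n+1`. -/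
noncomputable def etMat {n : ℕ} (κ : ℝ) (hpar : ℝ) (hperp : Fin n → ℝ)
    (H : Matrix (Fin n) (Fin n) ℝ) : Matrix (Fin (n + 1)) (Fin (n + 1)) ℝ :=
  κ • Matrix.of (Fin.cons
    (Fin.cons ((1 / ((n : ℝ) + 1) - 1) * hpar) hperp)
    (fun i' => Fin.cons (hperp i')
      (fun j' => H i' j' + (hpar / ((n : ℝ) + 1)) * (if i' = j' then 1 else 0))))

/-- The Lie bracket (commutator) of square matrices. -/
def lieB {m : Type*} [Fintype m] (X Y : Matrix m m ℝ) : Matrix m m ℝ :=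
  X * Y - Y * X

/-- Entrywise partial derivative in the second (`x`) variable of a matrix-valued function. -/
noncomputable def pdX {m : Type*} (F : ℝ → ℝ → Matrix m m ℝ) (t x : ℝ) : Matrix m m ℝ :=
  Matrix.of fun i j => deriv (fun y => F t y i j) x

/-- Entrywise partial derivative in the first (`t`) variable of a matrix-valued function. -/
noncomputable def pdT {m : Type*} (F : ℝ → ℝ → Matrix m m ℝ) (t x : ℝ) : Matrix m m ℝ :=
  Matrix.of fun i j => deriv (fun s => F s x i j) t

section Aux
variable {n : ℕ} (κ : ℝ) (v w ϖ : Fin n → ℝ) (hp : ℝ) (Θ H : Matrix (Fin n) (Fin n) ℝ)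

lemma L1 : (lieB (omegaMat v) (etMat κ hp w H)) 0 0 = 2 * κ * (∑ k, v k * w k) := by
  simp only [lieB, omegaMat, etMat, Matrix.mul_apply, Matrix.sub_apply, Fin.sum_univ_succ,
    Matrix.smul_apply, Matrix.of_apply, Fin.cons_zero, Fin.cons_succ, smul_eq_mul,
    Pi.zero_apply, mul_zero, zero_mul, add_zero, zero_add, Finset.sum_const_zero]
  have hs1 : (∑ k, v k * (κ * w k)) = κ * ∑ k, v k * w k := by
    rw [Finset.mul_sum]; exact Finset.sum_congr rfl fun k _ => by ring
  have hs2 : (∑ k, κ * w k * -v k) = -(κ * ∑ k, v k * w k) := by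
    rw [Finset.mul_sum, ← Finset.sum_neg_distrib]
    exact Finset.sum_congr rfl fun k _ => by ring
  linear_combination hs1 - hs2

lemma L2 (j : Fin n) : (lieB (omegaMat v) (etMat κ hp w H)) 0 j.succ =
    κ * (∑ k, v k * H k j) + κ * hp * v j := by
  simp only [lieB, omegaMat, etMat, Matrix.mul_apply, Matrix.sub_apply, Fin.sum_univ_succ,
    Matrix.smul_apply, Matrix.of_apply, Fin.cons_zero, Fin.cons_succ, smul_eq_mul,
    Pi.zero_apply, mul_zero, zero_mul, add_zero, zero_add, Finset.sum_const_zero,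
    mul_add, mul_ite, mul_one, Finset.sum_add_distrib, Finset.sum_ite_eq',
    Finset.mem_univ, if_true]
  have hs1 : (∑ k, v k * (κ * H k j)) = κ * ∑ k, v k * H k j := by
    rw [Finset.mul_sum]; exact Finset.sum_congr rfl fun k _ => by ring
  linear_combination hs1

lemma L3 (i : Fin n) : (lieB (omegaMat v) (etMat κ hp w H)) i.succ 0 =
    κ * (∑ k, H i k * v k) + κ * hp * v i := by
  simp only [lieB, omegaMat, etMat, Matrix.mul_apply, Matrix.sub_apply, Fin.sum_univ_succ,
    Matrix.smul_apply, Matrix.of_apply, Fin.cons_zero, Fin.cons_succ, smul_eq_mul,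
    Pi.zero_apply, mul_zero, zero_mul, add_zero, zero_add, Finset.sum_const_zero,
    mul_add, add_mul, mul_ite, ite_mul, mul_one, zero_mul, mul_zero,
    Finset.sum_add_distrib, Finset.sum_ite_eq, Finset.sum_ite_eq',
    Finset.mem_univ, if_true]
  have hs1 : (∑ k, κ * H i k * -v k) = -(κ * ∑ k, H i k * v k) := by
    rw [Finset.mul_sum, ← Finset.sum_neg_distrib]
    exact Finset.sum_congr rfl fun k _ => by ring
  linear_combination -hs1

lemma L4 (i j : Fin n) : (lieB (omegaMat v) (etMat κ hp w H)) i.succ j.succ =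
    -(κ * (v i * w j)) - κ * (w i * v j) := by
  simp only [lieB, omegaMat, etMat, Matrix.mul_apply, Matrix.sub_apply, Fin.sum_univ_succ,
    Matrix.smul_apply, Matrix.of_apply, Fin.cons_zero, Fin.cons_succ, smul_eq_mul,
    Pi.zero_apply, mul_zero, zero_mul, add_zero, zero_add, Finset.sum_const_zero]
  ring

lemma M1 : (lieB (Wmat ϖ Θ) (Emat n κ)) 0 0 = 0 := by
  simp [lieB, Wmat, Emat, Matrix.mul_smul, Matrix.smul_mul, Matrix.mul_diagonal,
    Matrix.diagonal_mul, Matrix.smul_apply, Matrix.sub_apply]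

lemma M2 (hne : ((n:ℝ)+1) ≠ 0) (j : Fin n) :
    (lieB (Wmat ϖ Θ) (Emat n κ)) 0 j.succ = κ * ϖ j := by
  simp [lieB, Wmat, Emat, Matrix.mul_smul, Matrix.smul_mul, Matrix.mul_diagonal,
    Matrix.diagonal_mul, Matrix.smul_apply, Matrix.sub_apply]
  field_simp
  ring

lemma M3 (hne : ((n:ℝ)+1) ≠ 0) (i : Fin n) :
    (lieB (Wmat ϖ Θ) (Emat n κ)) i.succ 0 = κ * ϖ i := by
  simp [lieB, Wmat, Emat, Matrix.mul_smul, Matrix.smul_mul, Matrix.mul_diagonal,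
    Matrix.diagonal_mul, Matrix.smul_apply, Matrix.sub_apply]
  field_simp

lemma M4 (i j : Fin n) : (lieB (Wmat ϖ Θ) (Emat n κ)) i.succ j.succ = 0 := by
  simp [lieB, Wmat, Emat, Matrix.mul_smul, Matrix.smul_mul, Matrix.mul_diagonal,
    Matrix.diagonal_mul, Matrix.smul_apply, Matrix.sub_apply]
end Aux

lemma diffAt_slice {f : ℝ × ℝ → ℝ} (hf : Differentiable ℝ f) (t x : ℝ) :
    DifferentiableAt ℝ (fun y => f (t, y)) x :=
  (hf (t, x)).comp x (DifferentiableAt.prodMk (differentiableAt_const _) differentiableAt_id)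

/-- for `SU(N)/SO(N)` with `N = n+1 ≥ 2` and `κ = √(2N/(N−1))`, with
`ω_x = ω_v`, `ω_t = [[0,ϖ],[−ϖᵀ,Θ]]`, `e_t = κ·[[(1/N−1)h∥, h⊥],[h⊥ᵀ, H+(h∥/N)·1]]`
and `E` constant, the zero-torsion equation `∂_x e_t − ∂_t E + [ω_x, e_t] − [ω_t, E] = 0`
holds identically on `ℝ²` iff the three component equations
`0 = 2κ⁻²∂_x h∥ − 2 v·h⊥`, `0 = ϖ − h∥v − ∂_x h⊥ − vH`, and
`0 = −∂_x(H + (h∥/N)·1) + v⊗h⊥ + h⊥⊗v` hold identically (Θ does not enter). -/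
theorem statement_11 (n : ℕ) (hn : 1 ≤ n) (κ : ℝ)
    (hκ : κ = Real.sqrt (2 * ((n : ℝ) + 1) / (((n : ℝ) + 1) - 1)))
    (v ϖ hperp : ℝ → ℝ → Fin n → ℝ) (hpar : ℝ → ℝ → ℝ)
    (Θ H : ℝ → ℝ → Matrix (Fin n) (Fin n) ℝ)
    (hΘskew : ∀ t x, (Θ t x)ᵀ = -(Θ t x))
    (hHsymm : ∀ t x, (H t x)ᵀ = H t x) (hHtr : ∀ t x, (H t x).trace = 0)
    (hvdiff : ∀ i, Differentiable ℝ (fun p : ℝ × ℝ => v p.1 p.2 i))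
    (hϖdiff : ∀ i, Differentiable ℝ (fun p : ℝ × ℝ => ϖ p.1 p.2 i))
    (hhperpdiff : ∀ i, Differentiable ℝ (fun p : ℝ × ℝ => hperp p.1 p.2 i))
    (hhpardiff : Differentiable ℝ (fun p : ℝ × ℝ => hpar p.1 p.2))
    (hΘdiff : ∀ i j, Differentiable ℝ (fun p : ℝ × ℝ => Θ p.1 p.2 i j))
    (hHdiff : ∀ i j, Differentiable ℝ (fun p : ℝ × ℝ => H p.1 p.2 i j)) :
    (∀ t x : ℝ,
        pdX (fun s y => etMat κ (hpar s y) (hperp s y) (H s y)) t x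
          - pdT (fun _ _ => Emat n κ) t x
          + lieB (omegaMat (v t x)) (etMat κ (hpar t x) (hperp t x) (H t x))
          - lieB (Wmat (ϖ t x) (Θ t x)) (Emat n κ) = 0)
    ↔ (∀ t x : ℝ,
        (0 = 2 * (κ ^ 2)⁻¹ * deriv (fun y => hpar t y) x - 2 * (v t x ⬝ᵥ hperp t x)) ∧
        (∀ i, 0 = ϖ t x i - hpar t x * v t x i - deriv (fun y => hperp t y i) x
            - Matrix.vecMul (v t x) (H t x) i) ∧
        (∀ i j, 0 = -deriv (fun y => H t y i j
              + (hpar t y / ((n : ℝ) + 1)) * (if i = j then 1 else 0)) x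
            + v t x i * hperp t x j + hperp t x i * v t x j)) := by
  have hn0 : (0:ℝ) < (n:ℝ) := by exact_mod_cast Nat.lt_of_lt_of_le Nat.zero_lt_one hn
  have hne : ((n:ℝ)+1) ≠ 0 := by positivity
  have hκpos : 0 < κ := by
    rw [hκ]
    apply Real.sqrt_pos.mpr
    have : ((n : ℝ) + 1) - 1 = (n:ℝ) := by ring
    rw [this]
    positivity
  have hκ0 : κ ≠ 0 := ne_of_gt hκpos
  have hκsq : κ ^ 2 = 2 * ((n:ℝ)+1) / (n:ℝ) := by
    have h1 : ((n : ℝ) + 1) - 1 = (n:ℝ) := by ring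
    rw [hκ, h1, Real.sq_sqrt (by positivity)]
  apply forall_congr'; intro t; apply forall_congr'; intro x
  -- differentiability slices
  have dhp : DifferentiableAt ℝ (fun y => hpar t y) x := diffAt_slice hhpardiff t x
  have dw : ∀ i, DifferentiableAt ℝ (fun y => hperp t y i) x :=
    fun i => diffAt_slice (hhperpdiff i) t x
  have dH : ∀ i j, DifferentiableAt ℝ (fun y => H t y i j) x :=
    fun i j => diffAt_slice (hHdiff i j) t x
  -- symmetry of H, entrywise
  have hsym : ∀ k i : Fin n, H t x k i = H t x i k := fun k i => by
    conv_lhs => rw [← hHsymm t x]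
    rfl
  set M := pdX (fun s y => etMat κ (hpar s y) (hperp s y) (H s y)) t x
          - pdT (fun _ _ => Emat n κ) t x
          + lieB (omegaMat (v t x)) (etMat κ (hpar t x) (hperp t x) (H t x))
          - lieB (Wmat (ϖ t x) (Θ t x)) (Emat n κ) with hM
  -- pdT of constant vanishes
  have hpdT : ∀ a b, pdT (fun _ _ : ℝ => Emat n κ) t x a b = 0 := by
    intro a b; simp [pdT]
  -- pdX entries
  have hpdX00 : pdX (fun s y => etMat κ (hpar s y) (hperp s y) (H s y)) t x 0 0
      = κ * ((1 / ((n:ℝ) + 1) - 1) * deriv (fun y => hpar t y) x) := by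
    simp only [pdX, Matrix.of_apply, etMat, Matrix.smul_apply, Fin.cons_zero, smul_eq_mul]
    rw [deriv_const_mul _ (dhp.const_mul _), deriv_const_mul _ dhp]
  have hpdX0S : ∀ j : Fin n, pdX (fun s y => etMat κ (hpar s y) (hperp s y) (H s y)) t x 0 j.succ
      = κ * deriv (fun y => hperp t y j) x := by
    intro j
    simp only [pdX, Matrix.of_apply, etMat, Matrix.smul_apply, Fin.cons_zero, Fin.cons_succ,
      smul_eq_mul]
    rw [deriv_const_mul _ (dw j)]
  have hpdXS0 : ∀ i : Fin n, pdX (fun s y => etMat κ (hpar s y) (hperp s y) (H s y)) t x i.succ 0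
      = κ * deriv (fun y => hperp t y i) x := by
    intro i
    simp only [pdX, Matrix.of_apply, etMat, Matrix.smul_apply, Fin.cons_zero, Fin.cons_succ,
      smul_eq_mul]
    rw [deriv_const_mul _ (dw i)]
  have hpdXSS : ∀ i j : Fin n,
      pdX (fun s y => etMat κ (hpar s y) (hperp s y) (H s y)) t x i.succ j.succ
      = κ * deriv (fun y => H t y i j + (hpar t y / ((n:ℝ)+1)) * (if i = j then 1 else 0)) x := by
    intro i j
    simp only [pdX, Matrix.of_apply, etMat, Matrix.smul_apply, Fin.cons_succ, smul_eq_mul]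
    exact deriv_const_mul _ ((dH i j).add ((dhp.div_const _).mul_const _))
  -- entry formulas
  have E00 : M 0 0 = -κ * (2 * (κ ^ 2)⁻¹ * deriv (fun y => hpar t y) x
      - 2 * (v t x ⬝ᵥ hperp t x)) := by
    rw [hM]
    simp only [Matrix.sub_apply, Matrix.add_apply, hpdT, hpdX00, L1, M1, dotProduct]
    rw [hκsq]
    field_simp
    ring
  have E0S : ∀ j, M 0 j.succ = -κ * (ϖ t x j - hpar t x * v t x j
      - deriv (fun y => hperp t y j) x - Matrix.vecMul (v t x) (H t x) j) := by
    intro j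
    rw [hM]
    simp only [Matrix.sub_apply, Matrix.add_apply, hpdT, hpdX0S, L2, M2 κ (ϖ t x) (Θ t x) hne,
      Matrix.vecMul, dotProduct]
    ring
  have ES0 : ∀ i, M i.succ 0 = -κ * (ϖ t x i - hpar t x * v t x i
      - deriv (fun y => hperp t y i) x - Matrix.vecMul (v t x) (H t x) i) := by
    intro i
    rw [hM]
    simp only [Matrix.sub_apply, Matrix.add_apply, hpdT, hpdXS0, L3, M3 κ (ϖ t x) (Θ t x) hne,
      Matrix.vecMul, dotProduct]
    have hs : (∑ k, H t x i k * v t x k) = ∑ k, v t x k * H t x k i := by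
      exact Finset.sum_congr rfl fun k _ => by rw [hsym k i]; ring
    linear_combination κ * hs
  have ESS : ∀ i j, M i.succ j.succ = -κ * (-deriv (fun y => H t y i j
        + (hpar t y / ((n : ℝ) + 1)) * (if i = j then 1 else 0)) x
      + v t x i * hperp t x j + hperp t x i * v t x j) := by
    intro i j
    rw [hM]
    simp only [Matrix.sub_apply, Matrix.add_apply, hpdT, hpdXSS, L4, M4]
    ring
  constructor
  · intro h
    have h' : ∀ a b, M a b = 0 := fun a b => by rw [h]; rfl
    refine ⟨?_, fun i => ?_, fun i j => ?_⟩
    · have := h' 0 0; rw [E00] at this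
      have := (mul_eq_zero.mp this).resolve_left (neg_ne_zero.mpr hκ0)
      linarith
    · have := h' 0 i.succ; rw [E0S] at this
      have := (mul_eq_zero.mp this).resolve_left (neg_ne_zero.mpr hκ0)
      linarith
    · have := h' i.succ j.succ; rw [ESS] at this
      have := (mul_eq_zero.mp this).resolve_left (neg_ne_zero.mpr hκ0)
      linarith
  · rintro ⟨h1, h2, h3⟩
    ext a b
    simp only [Matrix.zero_apply]
    refine Fin.cases ?_ (fun i => ?_) a <;> refine Fin.cases ?_ (fun j => ?_) b
    · rw [E00, ← h1, mul_zero]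
    · rw [E0S, ← h2, mul_zero]
    · rw [ES0, ← h2, mul_zero]
    · rw [ESS, ← h3, mul_zero]
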